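/- With the chained-block configuration of R⁽¹⁾,…,R⁽ˢ⁾ as above, if r₁⋯rₛ > 0 and r'₁⋯r'ₛ > 0, rⱼ, r'ⱼ ≥ 0, rⱼ² + |wⱼ|² = r'ⱼ² + |w'ⱼ|² = 1 for all j, and the products R⁽¹⁾(r₁,w₁)⋯R⁽ˢ⁾(rₛ,wₛ) and R⁽¹⁾(r'₁,w'₁)⋯R⁽ˢ⁾(r'ₛ,w'ₛ) have equal first columns, then (rⱼ, wⱼ) = (r'ⱼ, w'ⱼ) for all j = 1,…,s. -/

import Mathlib

open Complex Matrix

/-- The `N×N` matrix equal to the identity except that the `SU(2)`-matrix `R(a,b)`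
(rows `(a,b)`, `(-b̄,ā)`) is embedded in rows/columns `p, q`. -/
def embedR (N : ℕ) (a b : ℂ) (p q : Fin N) : Matrix (Fin N) (Fin N) ℂ :=
  fun i j =>
    if i = p ∧ j = p then a
    else if i = p ∧ j = q then b
    else if i = q ∧ j = p then -(starRingEnd ℂ) b
    else if i = q ∧ j = q then (starRingEnd ℂ) a
    else if i = j then 1 else 0

/-- Columns beyond index `s` of the partial product are identity columns. -/
lemma colP (N : ℕ) (r : ℕ → ℝ) (w : ℕ → ℂ) :
    ∀ s (hsN : s < N) (c : Fin N) (_hc : s < c.1) (i : Fin N),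
    (List.ofFn (fun j : Fin s => embedR N ((r (j.1 + 1) : ℝ) : ℂ) (w (j.1 + 1))
        ⟨0, by omega⟩ ⟨j.1 + 1, Nat.lt_of_lt_of_le (Nat.succ_lt_succ j.isLt) hsN⟩)).prod i c
      = if i = c then 1 else 0 := by
  intro s
  induction s with
  | zero =>
    intro hsN c hc i
    simp [List.ofFn_zero, Matrix.one_apply]
  | succ s ih =>
    intro hsN c hc i
    rw [List.ofFn_succ', List.prod_concat, Matrix.mul_apply]
    simp only [Fin.val_last, Fin.coe_castSucc]
    have hc0 : ¬ (c.1 = 0) := by omega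
    have hc1 : ¬ (c.1 = s + 1) := by omega
    have hM : ∀ k : Fin N,
        embedR N ((r (s + 1) : ℝ) : ℂ) (w (s + 1)) (⟨0, by omega⟩ : Fin N)
          ⟨s + 1, by omega⟩ k c = if k = c then 1 else 0 := by
      intro k
      simp [embedR, Fin.ext_iff, hc0, hc1]
    simp only [hM, mul_ite, mul_one, mul_zero, Finset.sum_ite_eq', Finset.mem_univ, if_true]
    exact ih (by omega) c (by omega) i

/-- First column of the partial product. -/
lemma colF (N : ℕ) (r : ℕ → ℝ) (w : ℕ → ℂ) :
    ∀ s (hsN : s < N) (i : Fin N),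
    (List.ofFn (fun j : Fin s => embedR N ((r (j.1 + 1) : ℝ) : ℂ) (w (j.1 + 1))
        ⟨0, by omega⟩ ⟨j.1 + 1, Nat.lt_of_lt_of_le (Nat.succ_lt_succ j.isLt) hsN⟩)).prod i ⟨0, by omega⟩
      = if i.1 = 0 then ∏ k ∈ Finset.Icc 1 s, ((r k : ℝ) : ℂ)
        else if i.1 ≤ s then
          -(starRingEnd ℂ) (w i.1) * ∏ k ∈ Finset.Icc (i.1 + 1) s, ((r k : ℝ) : ℂ)
        else 0 := by
  intro s
  induction s with
  | zero =>
    intro hsN i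
    by_cases h : i.1 = 0
    · have : i = (⟨0, by omega⟩ : Fin N) := by exact Fin.ext h
      simp [this, Matrix.one_apply]
    · have : ¬ i = (⟨0, by omega⟩ : Fin N) := by
        intro hh; exact h (by simpa [Fin.ext_iff] using hh)
      simp [Matrix.one_apply, h, this]
  | succ s ih =>
    intro hsN i
    rw [List.ofFn_succ', List.prod_concat, Matrix.mul_apply]
    simp only [Fin.val_last, Fin.coe_castSucc]
    have hM : ∀ k : Fin N,
        embedR N ((r (s + 1) : ℝ) : ℂ) (w (s + 1)) (⟨0, by omega⟩ : Fin N)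
          ⟨s + 1, by omega⟩ k ⟨0, by omega⟩
        = (if k = (⟨0, by omega⟩ : Fin N) then ((r (s+1) : ℝ) : ℂ) else 0)
          + (if k = (⟨s + 1, by omega⟩ : Fin N) then -(starRingEnd ℂ) (w (s+1)) else 0) := by
      intro k
      by_cases h0 : k.1 = 0
      · have : k = (⟨0, by omega⟩ : Fin N) := Fin.ext h0
        simp [this, embedR, Fin.ext_iff]
      · by_cases h1 : k.1 = s + 1
        · have : k = (⟨s + 1, by omega⟩ : Fin N) := Fin.ext h1
          simp [this, embedR, Fin.ext_iff, h0]
        · simp [embedR, Fin.ext_iff, h0, h1]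
    simp only [hM, mul_add, mul_ite, mul_zero, Finset.sum_add_distrib,
      Finset.sum_ite_eq', Finset.mem_univ, if_true]
    rw [ih (by omega) i, colP N r w s (by omega) ⟨s + 1, by omega⟩ (by simp) i]
    by_cases h0 : i.1 = 0
    · have hne : ¬ i = (⟨s + 1, by omega⟩ : Fin N) := by
        intro hh; rw [hh] at h0; simp at h0
      simp only [h0, if_true, hne, if_false, mul_zero, add_zero, zero_mul]
      rw [Finset.prod_Icc_succ_top (by omega) (fun k => ((r k : ℝ) : ℂ))]
    · by_cases h1 : i.1 ≤ s
      · have hne : ¬ i = (⟨s + 1, by omega⟩ : Fin N) := by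
          intro hh
          have : i.1 = s + 1 := by rw [hh]
          omega
        simp only [h0, if_false, h1, if_true, hne, mul_zero, add_zero, zero_mul,
          show i.1 ≤ s + 1 by omega, if_true]
        rw [Finset.prod_Icc_succ_top (by omega) (fun k => ((r k : ℝ) : ℂ))]
        ring
      · by_cases h2 : i.1 = s + 1
        · have heq : i = (⟨s + 1, by omega⟩ : Fin N) := Fin.ext h2
          simp only [h0, if_false, h1, if_false, heq, if_true, zero_mul, zero_add, one_mul,
            h2, show s + 1 ≤ s + 1 by omega, if_true]
          have : Finset.Icc (s + 1 + 1) (s + 1) = ∅ := by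
            apply Finset.Icc_eq_empty; omega
          rw [this]
          simp
        · have hne : ¬ i = (⟨s + 1, by omega⟩ : Fin N) := by
            intro hh
            have : i.1 = s + 1 := by rw [hh]
            omega
          simp only [h0, if_false, h1, if_false, hne, zero_mul, mul_zero, add_zero,
            show ¬ i.1 ≤ s + 1 by omega, if_false]

/-- Key induction step of Lemma 2: in the chained-block configuration, if
`r₁⋯rₛ > 0`, `r'₁⋯r'ₛ > 0`, all `rⱼ, r'ⱼ ≥ 0` with `rⱼ² + |wⱼ|² = r'ⱼ² + |w'ⱼ|² = 1`,
and the two products have equal first columns, then `(rⱼ,wⱼ) = (r'ⱼ,w'ⱼ)` for all `j`. -/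
theorem stmt8 (N s : ℕ) (hs : 1 ≤ s) (hN : s < N)
    (r r' : ℕ → ℝ) (w w' : ℕ → ℂ)
    (hr : ∀ j, 1 ≤ j → j ≤ s → 0 ≤ r j) (hr' : ∀ j, 1 ≤ j → j ≤ s → 0 ≤ r' j)
    (hsu : ∀ j, 1 ≤ j → j ≤ s → (r j) ^ 2 + Complex.normSq (w j) = 1)
    (hsu' : ∀ j, 1 ≤ j → j ≤ s → (r' j) ^ 2 + Complex.normSq (w' j) = 1)
    (hpos : 0 < ∏ j ∈ Finset.Icc 1 s, r j)
    (hpos' : 0 < ∏ j ∈ Finset.Icc 1 s, r' j)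
    (P P' : Matrix (Fin N) (Fin N) ℂ)
    (hP : P = (List.ofFn (fun j : Fin s =>
      embedR N ((r (j.1 + 1) : ℝ) : ℂ) (w (j.1 + 1))
        ⟨0, by omega⟩ ⟨j.1 + 1, by have := j.isLt; omega⟩)).prod)
    (hP' : P' = (List.ofFn (fun j : Fin s =>
      embedR N ((r' (j.1 + 1) : ℝ) : ℂ) (w' (j.1 + 1))
        ⟨0, by omega⟩ ⟨j.1 + 1, by have := j.isLt; omega⟩)).prod)
    (hcol : ∀ i : Fin N, P i ⟨0, by omega⟩ = P' i ⟨0, by omega⟩) :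
    ∀ j, 1 ≤ j → j ≤ s → r j = r' j ∧ w j = w' j := by
  have rpos : ∀ k, 1 ≤ k → k ≤ s → 0 < r k := by
    intro k h1 h2
    rcases lt_or_eq_of_le (hr k h1 h2) with h | h
    · exact h
    · exfalso
      have : ∏ j ∈ Finset.Icc 1 s, r j = 0 :=
        Finset.prod_eq_zero (Finset.mem_Icc.mpr ⟨h1, h2⟩) h.symm
      linarith
  have hPc : ∀ i : Fin N, P i ⟨0, by omega⟩
      = if i.1 = 0 then ∏ k ∈ Finset.Icc 1 s, ((r k : ℝ) : ℂ)
        else if i.1 ≤ s then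
          -(starRingEnd ℂ) (w i.1) * ∏ k ∈ Finset.Icc (i.1 + 1) s, ((r k : ℝ) : ℂ)
        else 0 := by
    subst hP; exact colF N r w s hN
  have hP'c : ∀ i : Fin N, P' i ⟨0, by omega⟩
      = if i.1 = 0 then ∏ k ∈ Finset.Icc 1 s, ((r' k : ℝ) : ℂ)
        else if i.1 ≤ s then
          -(starRingEnd ℂ) (w' i.1) * ∏ k ∈ Finset.Icc (i.1 + 1) s, ((r' k : ℝ) : ℂ)
        else 0 := by
    subst hP'; exact colF N r' w' s hN
  -- row equation for 1 ≤ j ≤ s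
  have hrow : ∀ j, 1 ≤ j → j ≤ s →
      -(starRingEnd ℂ) (w j) * ∏ k ∈ Finset.Icc (j + 1) s, ((r k : ℝ) : ℂ)
      = -(starRingEnd ℂ) (w' j) * ∏ k ∈ Finset.Icc (j + 1) s, ((r' k : ℝ) : ℂ) := by
    intro j h1 h2
    have := hcol ⟨j, by omega⟩
    rw [hPc, hP'c] at this
    simpa [show ¬ (j = 0) by omega, h2] using this
  have key : ∀ t j, 1 ≤ j → j ≤ s → s - j = t →
      (r j = r' j ∧ w j = w' j) ∧
      (∏ k ∈ Finset.Icc j s, r k = ∏ k ∈ Finset.Icc j s, r' k) := by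
    intro t
    induction t with
    | zero =>
      intro j h1 h2 ht
      have hjs : j = s := by omega
      subst hjs
      have hempty : Finset.Icc (j + 1) j = ∅ := Finset.Icc_eq_empty (by omega)
      have heq := hrow j h1 h2
      rw [hempty] at heq
      simp only [Finset.prod_empty, mul_one] at heq
      have hw : w j = w' j := by
        have := neg_injective heq
        exact (starRingEnd ℂ).injective this
      have hrr : r j = r' j := by
        have h1' := hsu j h1 h2
        have h2' := hsu' j h1 h2
        rw [hw] at h1'
        have := hr j h1 h2
        have := hr' j h1 h2
        nlinarith
      refine ⟨⟨hrr, hw⟩, ?_⟩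
      have : Finset.Icc j j = {j} := by simp
      rw [this]
      simp [hrr]
    | succ t ih =>
      intro j h1 h2 ht
      have hlt : j + 1 ≤ s := by omega
      obtain ⟨_, hnext⟩ := ih (j + 1) (by omega) hlt (by omega)
      have hcast : ∏ k ∈ Finset.Icc (j + 1) s, ((r k : ℝ) : ℂ)
          = ∏ k ∈ Finset.Icc (j + 1) s, ((r' k : ℝ) : ℂ) := by
        rw [← Complex.ofReal_prod, ← Complex.ofReal_prod, hnext]
      have hppos : 0 < ∏ k ∈ Finset.Icc (j + 1) s, r k := by
        apply Finset.prod_pos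
        intro k hk
        rw [Finset.mem_Icc] at hk
        exact rpos k (by omega) hk.2
      have hcne : (∏ k ∈ Finset.Icc (j + 1) s, ((r k : ℝ) : ℂ)) ≠ 0 := by
        rw [← Complex.ofReal_prod]
        exact_mod_cast ne_of_gt hppos
      have heq := hrow j h1 h2
      rw [← hcast] at heq
      have hw : w j = w' j := by
        have h' : (starRingEnd ℂ) (w j) = (starRingEnd ℂ) (w' j) := by
          have := mul_right_cancel₀ hcne heq
          exact neg_injective this
        exact (starRingEnd ℂ).injective h'
      have hrr : r j = r' j := by
        have h1' := hsu j h1 h2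
        have h2' := hsu' j h1 h2
        rw [hw] at h1'
        have := hr j h1 h2
        have := hr' j h1 h2
        nlinarith
      refine ⟨⟨hrr, hw⟩, ?_⟩
      have hins : Finset.Icc j s = insert j (Finset.Icc (j + 1) s) := by
        ext x; simp only [Finset.mem_Icc, Finset.mem_insert]; omega
      rw [hins, Finset.prod_insert (by simp), Finset.prod_insert (by simp), hrr, hnext]
  intro j h1 h2
  exact (key (s - j) j h1 h2 rfl).1
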